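/- arXiv:1810.05607 — 4 statements merged into one kernel-verified Lean document; each statement's English description precedes it below -/
import Mathlib

section
/- Fix reals α, β with 0 ≤ α < 1 and β > 1. For every word w in the language 𝓛 of Σ, the follower set {x ∈ {0,…,ℓ}^ℕ : wx ∈ Σ} (where wx denotes the concatenation of w with the sequence x) equals {x ∈ Σ : σ^{k₁(w)}(a) ⪯ x ⪯ σ^{k₂(w)}(b)}. -/
noncomputable section

namespace IntermediateBeta

/-- The intermediate beta transformation `x ↦ βx + α mod 1`. -/
def F (α β : ℝ) (x : ℝ) : ℝ := Int.fract (β * x + α)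

/-- The digit sequence of a point: `Om α β x n` is the index `i` with `F^[n] x ∈ J_i`.
For `y ∈ [0,1)` we have `y ∈ J_i ↔ ⌊β y + α⌋ = i`. -/
def Om (α β : ℝ) (x : ℝ) : ℕ → ℕ := fun n => (⌊β * ((F α β)^[n] x) + α⌋).toNat

/-- `ℓ = ⌈α + β⌉ - 1`. -/
def ell (α β : ℝ) : ℕ := ⌈α + β⌉₊ - 1

/-- The subshift `Σ`: closure (in the product topology) of the set of digit sequences
of points of `[0,1)`. -/
def Sig (α β : ℝ) : Set (ℕ → ℕ) := closure (Om α β '' Set.Ico (0 : ℝ) 1)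

/-- The shift map. -/
def shift (x : ℕ → ℕ) : ℕ → ℕ := fun n => x (n + 1)

/-- Lexicographic order on one-sided sequences. -/
def lexLe (x y : ℕ → ℕ) : Prop := x = y ∨ ∃ k, (∀ i < k, x i = y i) ∧ x k < y k

/-- The language of a subset `S` of the full shift: the finite words occurring as
initial segments of elements of `S`. -/
def langOf (S : Set (ℕ → ℕ)) (w : List ℕ) : Prop :=
  ∃ x ∈ S, ∀ i : Fin w.length, x i = w.get i

/-- Membership in the language `𝓛` of the subshift `Σ`. -/
def inLang (α β : ℝ) (w : List ℕ) : Prop := langOf (Sig α β) w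

/-- The tail segment of `w` of length `k` agrees with the initial segment of `s`
of length `k`. -/
def tailAgrees (s : ℕ → ℕ) (w : List ℕ) (k : ℕ) : Prop :=
  k ≤ w.length ∧ ∀ i < k, w.getD (w.length - k + i) 0 = s i

/-- `kmax s w` is the length of the longest tail segment of `w` agreeing with an
initial segment of `s` (`k₁(w)` when `s = a`, `k₂(w)` when `s = b`). -/
def kmax (s : ℕ → ℕ) (w : List ℕ) : ℕ := sSup {k | tailAgrees s w k}

/-- `D a b` is the set of lengths `n` such that the initial segment of `b` of
length `n` occurs somewhere in `a`.  Thus `D a b` is the set `𝖣(a)` of the paper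
and `D b a` is `𝖣(b)`. -/
def D (a b : ℕ → ℕ) : Set ℕ := {n | ∃ j, ∀ i < n, b i = a (j + i)}

/-- Gluing of the words `w 0, v 0, w 1, v 1, …, v (n-1), w n`. -/
def glue {n : ℕ} (w : Fin (n + 1) → List ℕ) (v : Fin n → List ℕ) : List ℕ :=
  (List.ofFn fun i : Fin n => w i.castSucc ++ v i).flatten ++ w (Fin.last n)

/-- A collection `G` of words inside the language `lang` has specification: there
is `τ ∈ ℕ` such that any finite list of words of `G` can be glued, with gluing
words from `lang` of length `τ`, into a word of `lang`. -/
def HasSpec (lang G : List ℕ → Prop) : Prop :=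
  ∃ τ : ℕ, 1 ≤ τ ∧ ∀ n : ℕ, ∀ w : Fin (n + 1) → List ℕ, (∀ i, G (w i)) →
    ∃ v : Fin n → List ℕ, (∀ i, (v i).length = τ ∧ lang (v i)) ∧ lang (glue w v)

/-- The initial segment of a sequence, as a finite word. -/
def pre (s : ℕ → ℕ) (n : ℕ) : List ℕ := List.ofFn fun i : Fin n => s i

/-- Lexicographic order for finite words (of equal length). -/
def wordLe (u v : List ℕ) : Prop :=
  u = v ∨ ∃ k, (∀ i < k, u.getD i 0 = v.getD i 0) ∧ u.getD k 0 < v.getD k 0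

/-- Concatenation of a finite word with an infinite sequence. -/
def wcat (w : List ℕ) (x : ℕ → ℕ) : ℕ → ℕ := fun n =>
  if h : n < w.length then w.get ⟨n, h⟩ else x (n - w.length)

-- === a.lean ===
def lexLt (x y : ℕ → ℕ) : Prop := ∃ k, (∀ i < k, x i = y i) ∧ x k < y k

lemma lexLe_refl (x : ℕ → ℕ) : lexLe x x := Or.inl rfl

lemma lexLt_asymm {x y : ℕ → ℕ} (h : lexLt x y) (h' : lexLt y x) : False := by
  obtain ⟨k, hk, hlt⟩ := h
  obtain ⟨k', hk', hlt'⟩ := h'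
  rcases lt_trichotomy k k' with h | rfl | h
  · exact absurd (hk' k h).symm (ne_of_lt hlt)
  · exact absurd (hlt.trans hlt') (lt_irrefl _)
  · exact absurd (hk k' h) (ne_of_gt hlt')

lemma lexLt_irrefl (x : ℕ → ℕ) : ¬ lexLt x x := fun h => lexLt_asymm h h

lemma lexLt_ne {x y : ℕ → ℕ} (h : lexLt x y) : x ≠ y := by
  rintro rfl; exact lexLt_irrefl x h

lemma lexLe_antisymm {x y : ℕ → ℕ} (h : lexLe x y) (h' : lexLe y x) : x = y := by
  rcases h with rfl | h
  · rfl
  rcases h' with rfl | h'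
  · rfl
  exact absurd (lexLt_asymm h h') id

lemma not_lexLe {x y : ℕ → ℕ} (h : ¬ lexLe x y) : lexLt y x := by
  have hne : x ≠ y := fun he => h (Or.inl he)
  have hex : ∃ k, x k ≠ y k := by
    by_contra hc
    push_neg at hc
    exact hne (funext hc)
  classical
  let k := Nat.find hex
  have hk : x k ≠ y k := Nat.find_spec hex
  have hag : ∀ i < k, x i = y i := fun i hi => by
    by_contra hc; exact absurd (Nat.find_le hc) (not_le.2 hi)
  rcases lt_or_gt_of_ne hk with hlt | hgt
  · exact absurd (Or.inr ⟨k, hag, hlt⟩) h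
  · exact ⟨k, fun i hi => (hag i hi).symm, hgt⟩

lemma lexLt_of_lexLe_of_ne {x y : ℕ → ℕ} (h : lexLe x y) (hne : x ≠ y) : lexLt x y :=
  h.resolve_left hne

lemma lexLe_of_lexLt {x y : ℕ → ℕ} (h : lexLt x y) : lexLe x y := Or.inr h

lemma not_lexLt_of_lexLe {x y : ℕ → ℕ} (h : lexLe x y) : ¬ lexLt y x := by
  intro h'
  rcases h with rfl | h
  · exact lexLt_irrefl _ h'
  · exact lexLt_asymm h h'

lemma lexLt_trans {x y z : ℕ → ℕ} (h : lexLt x y) (h' : lexLt y z) : lexLt x z := by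
  obtain ⟨k, hk, hlt⟩ := h
  obtain ⟨k', hk', hlt'⟩ := h'
  rcases lt_trichotomy k k' with hc | rfl | hc
  · exact ⟨k, fun i hi => (hk i hi).trans (hk' i (hi.trans hc)), (hk' k hc) ▸ hlt⟩
  · exact ⟨k, fun i hi => (hk i hi).trans (hk' i hi), hlt.trans hlt'⟩
  · exact ⟨k', fun i hi => (hk i (hi.trans hc)).trans (hk' i hi), (hk k' hc) ▸ hlt'⟩

lemma lexLe_trans {x y z : ℕ → ℕ} (h : lexLe x y) (h' : lexLe y z) : lexLe x z := by
  rcases h with rfl | h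
  · exact h'
  rcases h' with rfl | h'
  · exact Or.inr h
  · exact Or.inr (lexLt_trans h h')

-- === b.lean ===
lemma lexLe_of_forall_le {x y : ℕ → ℕ} (h : ∀ k, (∀ i < k, x i = y i) → x k ≤ y k) :
    lexLe x y := by
  by_contra hc
  obtain ⟨k, hk, hlt⟩ := not_lexLe hc
  exact absurd (h k fun i hi => (hk i hi).symm) (not_le.2 hlt)

lemma lexLe_head {x y : ℕ → ℕ} (h : lexLe x y) : x 0 ≤ y 0 := by
  rcases h with rfl | ⟨k, hk, hlt⟩
  · exact le_rfl
  rcases Nat.eq_zero_or_pos k with rfl | hpos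
  · exact hlt.le
  · exact (hk 0 hpos).le

lemma lexLe_shift {x y : ℕ → ℕ} (h : lexLe x y) (h0 : x 0 = y 0) :
    lexLe (shift x) (shift y) := by
  rcases h with rfl | ⟨k, hk, hlt⟩
  · exact Or.inl rfl
  rcases Nat.eq_zero_or_pos k with rfl | hpos
  · exact absurd h0 (ne_of_lt hlt)
  obtain ⟨k, rfl⟩ := Nat.exists_eq_add_of_le hpos
  exact Or.inr ⟨k, fun i hi => hk (i+1) (by omega), by simpa [shift, Nat.add_comm] using hlt⟩

/-- Sandwich: if `z ⪯ y ⪯ c` and `z` agrees with `c` on the first `N` entries,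
then so does `y`. -/
lemma agree_sandwich {z y c : ℕ → ℕ} (h1 : lexLe z y) (h2 : lexLe y c)
    (hN : ∀ i < N, z i = c i) : ∀ i < N, y i = c i := by
  intro i hi
  induction i using Nat.strong_induction_on with
  | _ i ih =>
  by_contra hne
  have hag : ∀ j < i, y j = c j := fun j hj => ih j hj (hj.trans hi)
  rcases h2 with rfl | ⟨k, hk, hlt⟩
  · exact hne rfl
  have hki : k = i := by
    rcases lt_trichotomy k i with hc | rfl | hc
    · exact absurd (hag k hc) (ne_of_lt hlt)
    · rfl
    · exact absurd (hk i hc) hne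
  subst hki
  -- y k < c k = z k, but z ⪯ y and z, y agree below k — contradiction
  have hzy : lexLt y z := ⟨k, fun j hj => (hag j hj).trans (hN j (hj.trans hi)).symm,
    by rw [hN k hi]; exact hlt⟩
  exact not_lexLt_of_lexLe h1 hzy

lemma lexLe_of_approx {c y : ℕ → ℕ}
    (h : ∀ N, ∃ z, (∀ i < N, z i = c i) ∧ lexLe z y) : lexLe c y := by
  by_contra hc
  obtain ⟨k, hk, hlt⟩ := not_lexLe hc
  obtain ⟨z, hz, hzy⟩ := h (k+1)
  have : lexLt y z := ⟨k, fun i hi => (hk i hi).trans (hz i (by omega)).symm,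
    by rw [hz k (by omega)]; exact hlt⟩
  exact not_lexLt_of_lexLe hzy this

-- === c.lean ===
variable {α β : ℝ}

lemma F_mem (α β x : ℝ) : F α β x ∈ Set.Ico (0 : ℝ) 1 :=
  ⟨Int.fract_nonneg _, Int.fract_lt_one _⟩

lemma iter_mem (hx : x ∈ Set.Ico (0:ℝ) 1) (n : ℕ) : (F α β)^[n] x ∈ Set.Ico (0:ℝ) 1 := by
  cases n with
  | zero => exact hx
  | succ n => rw [Function.iterate_succ_apply']; exact F_mem α β _

lemma Om_F (x : ℝ) : Om α β (F α β x) = shift (Om α β x) := by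
  funext n
  simp [Om, shift, Function.iterate_succ_apply]

lemma Om_iter (x : ℝ) (m : ℕ) : Om α β ((F α β)^[m] x) = shift^[m] (Om α β x) := by
  induction m with
  | zero => rfl
  | succ m ih =>
    rw [Function.iterate_succ_apply', Function.iterate_succ_apply', Om_F, ih]

lemma arg_nonneg (hβ : 0 < β) (hα : 0 ≤ α) {u : ℝ} (hu : 0 ≤ u) : (0:ℝ) ≤ β * u + α := by
  positivity

lemma Om_zero_eq_iff (hβ : 0 < β) (hα : 0 ≤ α) {u : ℝ} (hu : 0 ≤ u) {d : ℕ} :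
    Om α β u 0 = d ↔ (d : ℝ) ≤ β * u + α ∧ β * u + α < d + 1 := by
  have h0 : (0:ℤ) ≤ ⌊β * u + α⌋ := Int.floor_nonneg.2 (arg_nonneg hβ hα hu)
  have : Om α β u 0 = d ↔ ⌊β * u + α⌋ = (d : ℤ) := by
    unfold Om
    simp only [Function.iterate_zero_apply]
    omega
  rw [this, Int.floor_eq_iff]
  push_cast
  tauto

lemma F_eq_digit (hβ : 0 < β) (hα : 0 ≤ α) {u : ℝ} (hu : 0 ≤ u) {d : ℕ}
    (hd : Om α β u 0 = d) : F α β u = β * u + α - d := by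
  have h := (Om_zero_eq_iff hβ hα hu).1 hd
  have : ⌊β * u + α⌋ = (d : ℤ) := by
    rw [Int.floor_eq_iff]
    push_cast; tauto
  rw [F, Int.fract, this]; push_cast; ring

-- === d.lean ===
variable {α β : ℝ}

lemma iter_nonneg {x : ℝ} (hx : 0 ≤ x) (n : ℕ) : 0 ≤ (F α β)^[n] x := by
  cases n with
  | zero => exact hx
  | succ n => rw [Function.iterate_succ_apply']; exact Int.fract_nonneg _

/-- If the digits agree below `k`, the iterates stay ordered. -/
lemma iter_mono (hβ : 0 < β) (hα : 0 ≤ α) {u v : ℝ} (hu : 0 ≤ u) (huv : u ≤ v) (k : ℕ)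
    (h : ∀ i < k, Om α β u i = Om α β v i) : (F α β)^[k] u ≤ (F α β)^[k] v := by
  induction k with
  | zero => exact huv
  | succ k ih =>
    have hle : (F α β)^[k] u ≤ (F α β)^[k] v := ih fun i hi => h i (hi.trans (Nat.lt_succ_self k))
    have hfl : ⌊β * (F α β)^[k] u + α⌋ = ⌊β * (F α β)^[k] v + α⌋ := by
      have hd := h k (Nat.lt_succ_self k)
      have hnu : 0 ≤ (F α β)^[k] u := iter_nonneg hu k
      have hnv : 0 ≤ (F α β)^[k] v := iter_nonneg (hu.trans huv) k
      have h1 : (0:ℤ) ≤ ⌊β * (F α β)^[k] u + α⌋ := Int.floor_nonneg.2 (by positivity)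
      have h2 : (0:ℤ) ≤ ⌊β * (F α β)^[k] v + α⌋ := Int.floor_nonneg.2 (by positivity)
      have hd' : (⌊β * (F α β)^[k] u + α⌋).toNat = (⌊β * (F α β)^[k] v + α⌋).toNat := hd
      omega
    rw [Function.iterate_succ_apply', Function.iterate_succ_apply']
    show Int.fract (β * (F α β)^[k] u + α) ≤ Int.fract (β * (F α β)^[k] v + α)
    rw [Int.fract, Int.fract, hfl]
    have := mul_le_mul_of_nonneg_left hle hβ.le
    linarith

lemma Om_mono (hβ : 0 < β) (hα : 0 ≤ α) {u v : ℝ} (hu : 0 ≤ u) (huv : u ≤ v) :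
    lexLe (Om α β u) (Om α β v) := by
  refine lexLe_of_forall_le fun k hk => ?_
  have hle := iter_mono hβ hα hu huv k hk
  have h1 : ⌊β * (F α β)^[k] u + α⌋ ≤ ⌊β * (F α β)^[k] v + α⌋ := by
    apply Int.floor_le_floor
    nlinarith
  unfold Om
  omega

/-- Membership in `Σ` is approximation by digit sequences. -/
lemma mem_Sig_iff {x : ℕ → ℕ} :
    x ∈ Sig α β ↔ ∀ N, ∃ u ∈ Set.Ico (0:ℝ) 1, ∀ i < N, Om α β u i = x i := by
  constructor
  · intro hx N
    have hopen : IsOpen {y : ℕ → ℕ | ∀ i < N, y i = x i} := by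
      have : {y : ℕ → ℕ | ∀ i < N, y i = x i} = ⋂ i ∈ Finset.range N, {y | y i = x i} := by
        ext y; simp [Finset.mem_range]
      rw [this]
      refine isOpen_biInter_finset fun i _ => ?_
      show IsOpen ((fun y : ℕ → ℕ => y i) ⁻¹' {x i})
      exact (continuous_apply i).isOpen_preimage _ (isOpen_discrete _)
    have hmem : x ∈ {y : ℕ → ℕ | ∀ i < N, y i = x i} := fun i _ => rfl
    obtain ⟨y, hy1, hy2⟩ := mem_closure_iff.1 hx _ hopen hmem
    obtain ⟨u, hu, rfl⟩ := hy2
    exact ⟨u, hu, hy1⟩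
  · intro h
    rw [Sig, mem_closure_iff_nhds]
    intro t ht
    rw [nhds_pi, Filter.mem_pi] at ht
    obtain ⟨I, hIfin, ts, hts, hsub⟩ := ht
    obtain ⟨N, hN⟩ : ∃ N, ∀ i ∈ I, i < N := by
      obtain ⟨N, hN⟩ := hIfin.bddAbove
      exact ⟨N + 1, fun i hi => Nat.lt_succ_of_le (hN hi)⟩
    obtain ⟨u, hu, hagree⟩ := h N
    refine ⟨Om α β u, hsub fun i hi => ?_, Set.mem_image_of_mem _ hu⟩
    have : Om α β u i = x i := hagree i (hN i hi)
    rw [this]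
    have := hts i
    rwa [nhds_discrete, Filter.mem_pure] at this

-- === f.lean ===
variable {α β : ℝ}

lemma lexLe_of_approx' {y c : ℕ → ℕ}
    (h : ∀ N, ∃ z, (∀ i < N, z i = c i) ∧ lexLe y z) : lexLe y c := by
  by_contra hc
  obtain ⟨k, hk, hlt⟩ := not_lexLe hc
  obtain ⟨z, hz, hyz⟩ := h (k+1)
  have : lexLt z y := ⟨k, fun i hi => (hz i (by omega)).trans (hk i hi),
    by rw [hz k (by omega)]; exact hlt⟩
  exact absurd this (not_lexLt_of_lexLe hyz)

lemma Om_mem_Sig {u : ℝ} (hu : u ∈ Set.Ico (0:ℝ) 1) : Om α β u ∈ Sig α β :=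
  subset_closure (Set.mem_image_of_mem _ hu)

lemma shift_mem_Sig {x : ℕ → ℕ} (hx : x ∈ Sig α β) : shift x ∈ Sig α β := by
  rw [mem_Sig_iff] at hx ⊢
  intro N
  obtain ⟨u, hu, hagree⟩ := hx (N + 1)
  refine ⟨F α β u, F_mem α β u, fun i hi => ?_⟩
  rw [Om_F]
  exact hagree (i + 1) (by omega)

lemma shift_iter_mem_Sig {x : ℕ → ℕ} (hx : x ∈ Sig α β) (m : ℕ) :
    shift^[m] x ∈ Sig α β := by
  induction m with
  | zero => exact hx
  | succ m ih => rw [Function.iterate_succ_apply']; exact shift_mem_Sig ih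

/-- `a = Ω(0)` is the lexicographic minimum of `Σ`. -/
lemma a_min (hβ : 0 < β) (hα : 0 ≤ α) (hα1 : α < 1) {x : ℕ → ℕ} (hx : x ∈ Sig α β) :
    lexLe (Om α β 0) x := by
  refine lexLe_of_approx' fun N => ?_
  obtain ⟨u, hu, hagree⟩ := mem_Sig_iff.1 hx N
  exact ⟨Om α β u, hagree, Om_mono hβ hα le_rfl hu.1⟩

lemma Hmin (hβ : 0 < β) (hα : 0 ≤ α) (hα1 : α < 1) (j : ℕ) :
    lexLe (Om α β 0) (shift^[j] (Om α β 0)) :=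
  a_min hβ hα hα1 (shift_iter_mem_Sig (Om_mem_Sig ⟨le_rfl, by linarith⟩) j)

lemma Hmax {b : ℕ → ℕ} (hbsup : ∀ y ∈ Sig α β, lexLe y b) (hb : b ∈ Sig α β) (j : ℕ) :
    lexLe (shift^[j] b) b :=
  hbsup _ (shift_iter_mem_Sig hb j)

-- === e.lean ===
lemma shift_iter_apply (s : ℕ → ℕ) (j i : ℕ) : shift^[j] s i = s (j + i) := by
  induction j generalizing s i with
  | zero => simp
  | succ j ih =>
    rw [Function.iterate_succ_apply]
    rw [ih (shift s) i]
    show s (j + i + 1) = s (j + 1 + i)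
    congr 1
    omega

lemma tailAgrees_zero (s : ℕ → ℕ) (w : List ℕ) : tailAgrees s w 0 :=
  ⟨Nat.zero_le _, fun i hi => absurd hi (Nat.not_lt_zero i)⟩

lemma tailAgrees_bdd (s : ℕ → ℕ) (w : List ℕ) : BddAbove {k | tailAgrees s w k} :=
  ⟨w.length, fun _ hk => hk.1⟩

lemma kmax_spec (s : ℕ → ℕ) (w : List ℕ) : tailAgrees s w (kmax s w) :=
  Nat.sSup_mem (Set.nonempty_of_mem (tailAgrees_zero s w)) (tailAgrees_bdd s w)

lemma le_kmax {s : ℕ → ℕ} {w : List ℕ} {k : ℕ} (h : tailAgrees s w k) : k ≤ kmax s w :=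
  le_csSup (tailAgrees_bdd s w) h

lemma kmax_le_length (s : ℕ → ℕ) (w : List ℕ) : kmax s w ≤ w.length :=
  (kmax_spec s w).1

lemma kmax_nil (s : ℕ → ℕ) : kmax s [] = 0 :=
  Nat.le_zero.1 (kmax_le_length s [])

lemma tailAgrees_snoc_iff {s : ℕ → ℕ} {w : List ℕ} {d m : ℕ} :
    tailAgrees s (w ++ [d]) (m + 1) ↔ tailAgrees s w m ∧ d = s m := by
  have hlen : (w ++ [d]).length = w.length + 1 := by simp
  constructor
  · rintro ⟨h1, h2⟩
    rw [hlen] at h1 h2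
    have hm : m ≤ w.length := by omega
    refine ⟨⟨hm, fun i hi => ?_⟩, ?_⟩
    · have := h2 i (by omega)
      rwa [show w.length + 1 - (m+1) + i = w.length - m + i by omega,
        List.getD_append _ _ _ _ (by omega)] at this
    · have := h2 m (by omega)
      rwa [show w.length + 1 - (m+1) + m = w.length by omega,
        List.getD_append_right _ _ _ _ (le_refl _), Nat.sub_self] at this
  · rintro ⟨⟨h1, h2⟩, rfl⟩
    refine ⟨by rw [hlen]; omega, fun i hi => ?_⟩
    rw [hlen]
    rcases Nat.lt_or_ge i m with hc | hc
    · rw [show w.length + 1 - (m+1) + i = w.length - m + i by omega,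
        List.getD_append _ _ _ _ (by omega)]
      exact h2 i hc
    · have : i = m := by omega
      subst this
      rw [show w.length + 1 - (i+1) + i = w.length by omega,
        List.getD_append_right _ _ _ _ (le_refl _), Nat.sub_self]
      rfl

lemma kmax_snoc_le (s : ℕ → ℕ) (w : List ℕ) (d : ℕ) :
    kmax s (w ++ [d]) ≤ kmax s w + 1 := by
  rcases Nat.eq_zero_or_pos (kmax s (w ++ [d])) with h | h
  · omega
  · obtain ⟨m, hm⟩ := Nat.exists_eq_add_of_le h
    have := kmax_spec s (w ++ [d])
    rw [show kmax s (w ++ [d]) = m + 1 by omega] at this ⊢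
    have := (tailAgrees_snoc_iff.1 this).1
    have := le_kmax this
    omega

lemma kmax_snoc_eq {s : ℕ → ℕ} {w : List ℕ} {d : ℕ} (h : d = s (kmax s w)) :
    kmax s (w ++ [d]) = kmax s w + 1 := by
  have h1 : tailAgrees s (w ++ [d]) (kmax s w + 1) :=
    tailAgrees_snoc_iff.2 ⟨kmax_spec s w, h⟩
  exact le_antisymm (kmax_snoc_le s w d) (le_kmax h1)

lemma kmax_snoc_cases (s : ℕ → ℕ) (w : List ℕ) (d : ℕ) :
    kmax s (w ++ [d]) = 0 ∨
      ∃ m, kmax s (w ++ [d]) = m + 1 ∧ tailAgrees s w m ∧ d = s m ∧ m ≤ kmax s w := by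
  rcases Nat.eq_zero_or_pos (kmax s (w ++ [d])) with h | h
  · exact Or.inl h
  · obtain ⟨m, hm⟩ : ∃ m, kmax s (w ++ [d]) = m + 1 := ⟨kmax s (w++[d]) - 1, by omega⟩
    have hsp := kmax_spec s (w ++ [d])
    rw [hm] at hsp
    obtain ⟨h1, h2⟩ := tailAgrees_snoc_iff.1 hsp
    exact Or.inr ⟨m, hm, h1, h2, le_kmax h1⟩

/-- Reset lemma, minimal version: if `s` is lexicographically below all its
shifts and `d` exceeds `s (kmax s w)`, then the new `kmax` is `0`. -/
lemma kmax_snoc_reset_min {s : ℕ → ℕ} {w : List ℕ} {d : ℕ}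
    (Hmin : ∀ j, lexLe s (shift^[j] s)) (hd : s (kmax s w) < d) :
    kmax s (w ++ [d]) = 0 := by
  rcases kmax_snoc_cases s w d with h | ⟨m, hm, hta, rfl, hle⟩
  · exact h
  set k := kmax s w with hk
  have hmk : m < k := lt_of_le_of_ne hle (by rintro rfl; exact absurd rfl (ne_of_gt hd))
  obtain ⟨hk1, hk2⟩ := kmax_spec s w
  obtain ⟨hm1, hm2⟩ := hta
  have hagree : ∀ i < m, shift^[k - m] s i = s i := by
    intro i hi
    rw [shift_iter_apply]
    have e1 := hk2 (k - m + i) (by omega)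
    have e2 := hm2 i hi
    rw [show w.length - k + (k - m + i) = w.length - m + i by omega] at e1
    rw [e2] at e1
    exact e1.symm
  have hlt : lexLt (shift^[k - m] s) s := by
    refine ⟨m, hagree, ?_⟩
    rw [shift_iter_apply, show k - m + m = k by omega]
    exact hd
  exact absurd hlt (not_lexLt_of_lexLe (Hmin (k - m)))

lemma kmax_snoc_reset_max {s : ℕ → ℕ} {w : List ℕ} {d : ℕ}
    (Hmax : ∀ j, lexLe (shift^[j] s) s) (hd : d < s (kmax s w)) :
    kmax s (w ++ [d]) = 0 := by
  rcases kmax_snoc_cases s w d with h | ⟨m, hm, hta, rfl, hle⟩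
  · exact h
  set k := kmax s w with hk
  have hmk : m < k := lt_of_le_of_ne hle (by rintro rfl; exact absurd rfl (ne_of_lt hd))
  obtain ⟨hk1, hk2⟩ := kmax_spec s w
  obtain ⟨hm1, hm2⟩ := hta
  have hagree : ∀ i < m, s i = shift^[k - m] s i := by
    intro i hi
    rw [shift_iter_apply]
    have e1 := hk2 (k - m + i) (by omega)
    have e2 := hm2 i hi
    rw [show w.length - k + (k - m + i) = w.length - m + i by omega] at e1
    rw [e2] at e1
    exact e1
  have hlt : lexLt s (shift^[k - m] s) := by
    refine ⟨m, hagree, ?_⟩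
    rw [shift_iter_apply, show k - m + m = k by omega]
    exact hd
  exact absurd hlt (not_lexLt_of_lexLe (Hmax (k - m)))

-- === g.lean ===
/-- The set of points of `[0,1)` whose digit sequence starts with `w`. -/
def U (α β : ℝ) (w : List ℕ) : Set ℝ :=
  {u ∈ Set.Ico (0:ℝ) 1 | ∀ i < w.length, Om α β u i = w.getD i 0}

/-- The image of `U w` under `F^[|w|]`: the interval of "follower points". -/
def V (α β : ℝ) (w : List ℕ) : Set ℝ := (F α β)^[w.length] '' U α β w

variable {α β : ℝ}

lemma U_nil : U α β [] = Set.Ico (0:ℝ) 1 := by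
  ext u; simp [U]

lemma V_nil : V α β [] = Set.Ico (0:ℝ) 1 := by
  simp [V, U_nil]

lemma U_snoc (w : List ℕ) (d : ℕ) :
    U α β (w ++ [d]) = {u ∈ U α β w | Om α β u w.length = d} := by
  ext u
  simp only [U, Set.mem_setOf_eq, Set.mem_sep_iff, List.length_append, List.length_singleton]
  constructor
  · rintro ⟨hu, h⟩
    refine ⟨⟨hu, fun i hi => ?_⟩, ?_⟩
    · rw [← List.getD_append _ [d] _ _ hi]
      exact h i (by omega)
    · have := h w.length (by omega)
      rwa [List.getD_append_right _ _ _ _ le_rfl, Nat.sub_self] at this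
  · rintro ⟨⟨hu, h⟩, hd⟩
    refine ⟨hu, fun i hi => ?_⟩
    rcases Nat.lt_or_ge i w.length with hc | hc
    · rw [List.getD_append _ [d] _ _ hc]
      exact h i hc
    · have : i = w.length := by omega
      subst this
      rwa [List.getD_append_right _ _ _ _ le_rfl, Nat.sub_self]

lemma V_snoc (w : List ℕ) (d : ℕ) :
    V α β (w ++ [d]) = F α β '' {v ∈ V α β w | Om α β v 0 = d} := by
  have hUV : (F α β)^[w.length] '' U α β (w ++ [d]) = {v ∈ V α β w | Om α β v 0 = d} := by
    ext v
    constructor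
    · rintro ⟨u, hu, rfl⟩
      rw [U_snoc] at hu
      refine ⟨⟨u, hu.1, rfl⟩, ?_⟩
      rw [Om_iter, shift_iter_apply]
      rw [Nat.add_zero]
      exact hu.2
    · rintro ⟨⟨u, hu, rfl⟩, hd⟩
      rw [Om_iter, shift_iter_apply, Nat.add_zero] at hd
      exact ⟨u, by rw [U_snoc]; exact ⟨hu, hd⟩, rfl⟩
  calc V α β (w ++ [d]) = (F α β)^[w.length + 1] '' U α β (w ++ [d]) := by
        rw [V]; congr 1; simp
    _ = F α β '' ((F α β)^[w.length] '' U α β (w ++ [d])) := by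
        rw [show w.length + 1 = w.length.succ from rfl, Function.iterate_succ']
        exact Set.image_comp _ _ _
    _ = _ := by rw [hUV]

/-- Intersecting an interval inside `[0,1)` with the digit-`d` set. -/
lemma inter_digit (hβ : 0 < β) (hα : 0 ≤ α) {s t : ℝ} (hs : 0 ≤ s) (ht : t ≤ 1) (d : ℕ) :
    {v ∈ Set.Ico s t | Om α β v 0 = d} =
      Set.Ico (max s ((d - α)/β)) (min t ((d + 1 - α)/β)) := by
  ext v
  simp only [Set.mem_sep_iff, Set.mem_Ico, le_max_iff, lt_min_iff, max_le_iff, sup_le_iff]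
  constructor
  · rintro ⟨⟨h1, h2⟩, h3⟩
    have := (Om_zero_eq_iff hβ hα (hs.trans h1)).1 h3
    constructor
    · constructor
      · exact h1
      · rw [div_le_iff₀ hβ]; linarith [this.1]
    · constructor
      · exact h2
      · rw [lt_div_iff₀ hβ]; linarith [this.2]
  · rintro ⟨⟨h1, h2⟩, h3, h4⟩
    refine ⟨⟨h1, h3⟩, (Om_zero_eq_iff hβ hα (hs.trans h1)).2 ⟨?_, ?_⟩⟩
    · rw [div_le_iff₀ hβ] at h2; linarith
    · rw [lt_div_iff₀ hβ] at h4; push_cast; linarith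

/-- The image under `F` of an interval of points all having digit `d`. -/
lemma F_image (hβ : 0 < β) (hα : 0 ≤ α) {p q : ℝ} (hp : 0 ≤ p)
    (hall : ∀ v, p ≤ v → v < q → Om α β v 0 = d) :
    F α β '' Set.Ico p q = Set.Ico (β * p + α - d) (β * q + α - d) := by
  rcases le_or_gt q p with hqp | hpq
  · rw [Set.Ico_eq_empty (by intro h; exact absurd hqp (not_le.2 h)), Set.Ico_eq_empty]
    · simp
    · intro h
      have : β * q ≤ β * p := mul_le_mul_of_nonneg_left hqp hβ.le
      linarith
  · ext y
    simp only [Set.mem_image, Set.mem_Ico]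
    constructor
    · rintro ⟨v, ⟨h1, h2⟩, rfl⟩
      rw [F_eq_digit hβ hα (hp.trans h1) (hall v h1 h2)]
      constructor
      · have := mul_le_mul_of_nonneg_left h1 hβ.le; linarith
      · have := mul_lt_mul_of_pos_left h2 hβ; linarith
    · rintro ⟨h1, h2⟩
      refine ⟨(y + d - α)/β, ⟨?_, ?_⟩, ?_⟩
      · rw [le_div_iff₀ hβ]; linarith
      · rw [div_lt_iff₀ hβ]; linarith
      · have hv1 : p ≤ (y + d - α)/β := by rw [le_div_iff₀ hβ]; linarith
        have hv2 : (y + d - α)/β < q := by rw [div_lt_iff₀ hβ]; linarith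
        rw [F_eq_digit hβ hα (hp.trans hv1) (hall _ hv1 hv2)]
        field_simp; ring

-- === h.lean ===
variable {α β : ℝ}

theorem main_induction (hβ : 1 < β) (hα : 0 ≤ α) (hα1 : α < 1)
    (b : ℕ → ℕ) (hb : b ∈ Sig α β) (hbsup : ∀ y ∈ Sig α β, lexLe y b)
    (w : List ℕ) : (U α β w).Nonempty →
      ∃ s t : ℝ, 0 ≤ s ∧ s < t ∧ t ≤ 1 ∧ V α β w = Set.Ico s t ∧
        Om α β s = shift^[kmax (Om α β 0) w] (Om α β 0) ∧
        (∀ u, s ≤ u → u < t → lexLe (Om α β u) (shift^[kmax b w] b)) ∧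
        (∀ u, t ≤ u → u < 1 → lexLe (shift^[kmax b w] b) (Om α β u)) ∧
        (∀ N, ∃ u, s ≤ u ∧ u < t ∧ ∀ i < N, Om α β u i = shift^[kmax b w] b i) := by
  have hβ' : (0:ℝ) < β := by linarith
  induction w using List.reverseRecOn with
  | nil =>
    intro _
    refine ⟨0, 1, le_rfl, one_pos, le_rfl, V_nil, ?_, ?_, ?_, ?_⟩
    · rw [kmax_nil]; rfl
    · intro u hu0 hu1
      rw [kmax_nil]
      exact hbsup _ (Om_mem_Sig ⟨hu0, hu1⟩)
    · intro u hu1 hu1'; linarith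
    · intro N
      rw [kmax_nil]
      obtain ⟨u, hu, hagree⟩ := mem_Sig_iff.1 hb N
      exact ⟨u, hu.1, hu.2, hagree⟩
  | append_singleton w d ih =>
    intro hne'
    have hneU : (U α β w).Nonempty := by
      obtain ⟨u, hu⟩ := hne'
      rw [U_snoc] at hu
      exact ⟨u, hu.1⟩
    obtain ⟨s, t, hs0, hst, ht1, hV, hInv1, hInv2, hInv3, hInv5⟩ := ih hneU
    set a := Om α β 0 with ha
    set k1 := kmax a w with hk1
    set k2 := kmax b w with hk2
    set dl := ((d:ℝ) - α)/β with hdl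
    set dr := ((d:ℝ) + 1 - α)/β with hdr
    set m0 := max s dl with hm0
    set m1 := min t dr with hm1
    have hW : {v ∈ V α β w | Om α β v 0 = d} = Set.Ico m0 m1 := by
      rw [hV, inter_digit hβ' hα hs0 ht1]
    have hall : ∀ v, m0 ≤ v → v < m1 → Om α β v 0 = d := by
      intro v h1 h2
      have : v ∈ {v ∈ V α β w | Om α β v 0 = d} := by rw [hW]; exact ⟨h1, h2⟩
      exact this.2
    have hm00 : (0:ℝ) ≤ m0 := hs0.trans (le_max_left s dl)
    set s' := β * m0 + α - (d:ℝ) with hs'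
    set t' := β * m1 + α - (d:ℝ) with ht'
    have hFim : F α β '' Set.Ico m0 m1 = Set.Ico s' t' := F_image hβ' hα hm00 hall
    have himg : V α β (w ++ [d]) = Set.Ico s' t' := by
      rw [V_snoc, hW, hFim]
    have hVne : (V α β (w ++ [d])).Nonempty := hne'.image _
    have hst' : s' < t' := by
      rw [himg] at hVne
      exact Set.nonempty_Ico.1 hVne
    have hm01 : m0 < m1 := by
      by_contra hc
      push_neg at hc
      have := mul_le_mul_of_nonneg_left hc hβ'.le
      rw [hs', ht'] at hst'
      linarith
    have hm0d : Om α β m0 0 = d := hall m0 le_rfl hm01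
    have hm0iff := (Om_zero_eq_iff hβ' hα hm00).1 hm0d
    have hs'0 : (0:ℝ) ≤ s' := by rw [hs']; linarith [hm0iff.1]
    have ht'1 : t' ≤ 1 := by
      have h1 : m1 ≤ dr := min_le_right t dr
      have h2 := mul_le_mul_of_nonneg_left h1 hβ'.le
      have hcalc : β * dr = (d:ℝ) + 1 - α := by
        rw [hdr]; field_simp
      rw [ht']; linarith
    -- head digit comparisons
    have hOms0 : Om α β s 0 = a k1 := by
      rw [hInv1, shift_iter_apply, Nat.add_zero]
    have hhead1 : a k1 ≤ d := by
      have h := lexLe_head (Om_mono hβ' hα hs0 (le_max_left s dl))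
      rw [hOms0, hm0d] at h
      exact h
    have hB0 : shift^[k2] b 0 = b k2 := by rw [shift_iter_apply, Nat.add_zero]
    have hhead2 : d ≤ b k2 := by
      have h := lexLe_head (hInv2 m0 (le_max_left s dl) (lt_of_lt_of_le hm01 (min_le_left t dr)))
      rw [hm0d, hB0] at h
      exact h
    have hmemV : ∀ u, s' ≤ u → u < t' → u ∈ Set.Ico (0:ℝ) 1 := fun u h1 h2 =>
      ⟨hs'0.trans h1, lt_of_lt_of_le h2 ht'1⟩
    -- if d < b k2 then the right endpoint is 1
    have hdrt : d < b k2 → t' = 1 := by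
      intro hdb'
      obtain ⟨v1, hv1s, hv1t, hv1ag⟩ := hInv5 1
      have h0 : Om α β v1 0 = b k2 := by rw [hv1ag 0 one_pos, hB0]
      have hdig := (Om_zero_eq_iff hβ' hα (hs0.trans hv1s)).1 h0
      have hcast : (d:ℝ) + 1 ≤ b k2 := by exact_mod_cast hdb'
      have hdrv : dr ≤ v1 := by rw [hdr, div_le_iff₀ hβ']; linarith [hdig.1]
      have hm1dr : m1 = dr := min_eq_right (hdrv.trans hv1t.le)
      rw [ht', hm1dr, hdr]; field_simp; ring
    -- key approximation points in the case d = b k2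
    have hdbkey : d = b k2 → ∀ N, ∃ z, s' ≤ z ∧ z < t' ∧
        ∀ i < N, Om α β z i = shift^[k2] b (i+1) := by
      intro hdb N
      obtain ⟨v, hvs, hvt, hvag⟩ := hInv5 (N+1)
      have hv0 : 0 ≤ v := hs0.trans hvs
      have hvd : Om α β v 0 = d := by rw [hvag 0 (Nat.succ_pos N), hB0, ← hdb]
      have hdig := (Om_zero_eq_iff hβ' hα hv0).1 hvd
      have hvm0 : m0 ≤ v := max_le hvs (by rw [hdl, div_le_iff₀ hβ']; linarith [hdig.1])
      have hvm1 : v < m1 := lt_min hvt (by rw [hdr, lt_div_iff₀ hβ']; linarith [hdig.2])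
      have hFv : F α β v = β * v + α - d := F_eq_digit hβ' hα hv0 hvd
      refine ⟨F α β v, ?_, ?_, fun i hi => ?_⟩
      · rw [hFv, hs']
        have := mul_le_mul_of_nonneg_left hvm0 hβ'.le
        linarith
      · rw [hFv, ht']
        have := mul_lt_mul_of_pos_left hvm1 hβ'
        linarith
      · rw [Om_F]
        exact hvag (i+1) (by omega)
    refine ⟨s', t', hs'0, hst', ht'1, himg, ?_, ?_, ?_, ?_⟩
    · -- Invariant 1 : new left endpoint
      rcases eq_or_lt_of_le hhead1 with hda | hda
      · have hOmsd : Om α β s 0 = d := by rw [hOms0, hda]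
        have hdls : dl ≤ s := by
          have h := ((Om_zero_eq_iff hβ' hα hs0).1 hOmsd).1
          rw [hdl, div_le_iff₀ hβ']
          linarith
        have hm0s : m0 = s := max_eq_left hdls
        have hFs : F α β s = s' := by
          rw [F_eq_digit hβ' hα hs0 hOmsd, hs', hm0s]
        rw [kmax_snoc_eq hda.symm, ← hFs, Om_F, hInv1, Function.iterate_succ_apply']
      · have hsdl : s < dl := by
          have h := ((Om_zero_eq_iff hβ' hα hs0).1 hOms0).2
          have hcast : (a k1 : ℝ) + 1 ≤ d := by exact_mod_cast hda
          rw [hdl, lt_div_iff₀ hβ']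
          linarith
        have hm0dl : m0 = dl := max_eq_right hsdl.le
        have hs'eq : s' = 0 := by rw [hs', hm0dl, hdl]; field_simp; ring
        rw [kmax_snoc_reset_min (Hmin hβ' hα hα1) hda, hs'eq]
        rfl
    · -- Invariant 2 : everything in the new interval is below the new bound
      intro u' hu's hu't
      have : u' ∈ F α β '' Set.Ico m0 m1 := by rw [hFim]; exact ⟨hu's, hu't⟩
      obtain ⟨v, ⟨hvm0, hvm1⟩, rfl⟩ := this
      have hvd : Om α β v 0 = d := hall v hvm0 hvm1
      have hvs : s ≤ v := (le_max_left s dl).trans hvm0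
      have hvt : v < t := lt_of_lt_of_le hvm1 (min_le_left t dr)
      have hle := hInv2 v hvs hvt
      rcases eq_or_lt_of_le hhead2 with hdb | hdb
      · rw [Om_F, kmax_snoc_eq hdb, Function.iterate_succ_apply']
        exact lexLe_shift hle (by rw [hvd, hB0, hdb])
      · rw [kmax_snoc_reset_max (Hmax hbsup hb) hdb, Function.iterate_zero_apply]
        exact hbsup _ (Om_mem_Sig (hmemV _ hu's hu't))
    · -- Invariant 3 : everything above the new interval is above the new bound
      intro u' hu't hu'1
      rcases eq_or_lt_of_le hhead2 with hdb | hdb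
      · rw [kmax_snoc_eq hdb]
        refine lexLe_of_approx fun N => ?_
        obtain ⟨z, h1, h2, h3⟩ := hdbkey hdb N
        refine ⟨Om α β z, fun i hi => ?_, Om_mono hβ' hα (hs'0.trans h1) (h2.le.trans hu't)⟩
        rw [h3 i hi, shift_iter_apply, shift_iter_apply]
        congr 1
        omega
      · have := hdrt hdb
        linarith
    · -- Invariant 5 : the new bound is approximated inside the new interval
      intro N
      rcases eq_or_lt_of_le hhead2 with hdb | hdb
      · rw [kmax_snoc_eq hdb]
        obtain ⟨z, h1, h2, h3⟩ := hdbkey hdb N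
        refine ⟨z, h1, h2, fun i hi => ?_⟩
        rw [h3 i hi, shift_iter_apply, shift_iter_apply]
        congr 1
        omega
      · have ht'top : t' = 1 := hdrt hdb
        rw [kmax_snoc_reset_max (Hmax hbsup hb) hdb]
        simp only [Function.iterate_zero_apply]
        obtain ⟨u, hu, hagree⟩ := mem_Sig_iff.1 hb N
        by_cases hus : s' ≤ u
        · exact ⟨u, hus, by rw [ht'top]; exact hu.2, hagree⟩
        · push_neg at hus
          have h1 : lexLe (Om α β u) (Om α β s') := Om_mono hβ' hα hu.1 hus.le
          have h2 : lexLe (Om α β s') b :=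
            hbsup _ (Om_mem_Sig ⟨hs'0, lt_of_lt_of_le hst' ht'1⟩)
          exact ⟨s', le_rfl, hst', agree_sandwich h1 h2 hagree⟩

-- === i.lean ===
/-- Peeling an initial `a`-segment off a lower lexicographic bound. -/
lemma peel_lower {a y x : ℕ → ℕ} {k : ℕ} (h : lexLe a y) (h1 : ∀ i < k, y i = a i)
    (h2 : ∀ i, y (k + i) = x i) : lexLe (shift^[k] a) x := by
  rcases h with he | ⟨j, hj, hlt⟩
  · left
    funext i
    rw [shift_iter_apply, he, h2 i]
  · rcases Nat.lt_or_ge j k with hc | hc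
    · exact absurd (h1 j hc).symm (ne_of_lt hlt)
    · right
      refine ⟨j - k, fun i hi => ?_, ?_⟩
      · rw [shift_iter_apply, ← h2 i, hj (k + i) (by omega)]
      · rw [shift_iter_apply, show k + (j - k) = j by omega, ← h2 (j - k),
          show k + (j - k) = j by omega]
        exact hlt

lemma peel_upper {b y x : ℕ → ℕ} {k : ℕ} (h : lexLe y b) (h1 : ∀ i < k, y i = b i)
    (h2 : ∀ i, y (k + i) = x i) : lexLe x (shift^[k] b) := by
  rcases h with he | ⟨j, hj, hlt⟩
  · left
    funext i
    rw [shift_iter_apply, ← he, h2 i]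
  · rcases Nat.lt_or_ge j k with hc | hc
    · exact absurd (h1 j hc) (ne_of_lt hlt)
    · right
      refine ⟨j - k, fun i hi => ?_, ?_⟩
      · rw [shift_iter_apply, ← h2 i, hj (k + i) (by omega)]
      · rw [shift_iter_apply, show k + (j - k) = j by omega, ← h2 (j - k),
          show k + (j - k) = j by omega]
        exact hlt

lemma wcat_lt {w : List ℕ} {x : ℕ → ℕ} {i : ℕ} (h : i < w.length) :
    wcat w x i = w.getD i 0 := by
  rw [wcat, dif_pos h, List.getD_eq_getElem _ _ h]
  rfl

lemma wcat_ge {w : List ℕ} {x : ℕ → ℕ} (i : ℕ) : wcat w x (w.length + i) = x i := by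
  rw [wcat, dif_neg (by omega)]
  congr 1
  omega

lemma shift_wcat (w : List ℕ) (x : ℕ → ℕ) : shift^[w.length] (wcat w x) = x := by
  funext i
  rw [shift_iter_apply, wcat_ge]

/-- **Follower set description.** For `0 ≤ α < 1` and `β > 1` and every word `w`
of the language `𝓛` of `Σ`, the follower set `{x : wx ∈ Σ}` equals
`{x ∈ Σ : σ^{k₁(w)}(a) ⪯ x ⪯ σ^{k₂(w)}(b)}`. -/
theorem follower_set_eq (α β : ℝ) (hα0 : 0 ≤ α) (hα1 : α < 1) (hβ : 1 < β)
    (b : ℕ → ℕ) (hb : b ∈ Sig α β) (hbsup : ∀ y ∈ Sig α β, lexLe y b)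
    (w : List ℕ) (hw : inLang α β w) :
    {x : ℕ → ℕ | wcat w x ∈ Sig α β} =
      {x ∈ Sig α β |
        lexLe (shift^[kmax (Om α β 0) w] (Om α β 0)) x ∧
        lexLe x (shift^[kmax b w] b)} := by
  have hβ' : (0:ℝ) < β := by linarith
  set a := Om α β 0 with ha
  set n := w.length with hn
  set k1 := kmax a w with hk1
  set k2 := kmax b w with hk2
  ext x
  simp only [Set.mem_setOf_eq, Set.mem_sep_iff]
  constructor
  · -- wx ∈ Σ → x ∈ Σ with the two bounds
    intro hwx
    have hxS : x ∈ Sig α β := by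
      have := shift_iter_mem_Sig hwx n
      rwa [shift_wcat] at this
    refine ⟨hxS, ?_, ?_⟩
    · -- lower bound
      obtain ⟨hk1n, hk1ag⟩ := kmax_spec a w
      have hyS : shift^[n - k1] (wcat w x) ∈ Sig α β := shift_iter_mem_Sig hwx (n - k1)
      refine peel_lower (a_min hβ' hα0 hα1 hyS) (fun i hi => ?_) (fun i => ?_)
      · rw [shift_iter_apply, wcat_lt (by omega)]
        exact hk1ag i hi
      · rw [shift_iter_apply, show n - k1 + (k1 + i) = n + i by omega, wcat_ge]
    · -- upper bound
      obtain ⟨hk2n, hk2ag⟩ := kmax_spec b w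
      have hyS : shift^[n - k2] (wcat w x) ∈ Sig α β := shift_iter_mem_Sig hwx (n - k2)
      refine peel_upper (hbsup _ hyS) (fun i hi => ?_) (fun i => ?_)
      · rw [shift_iter_apply, wcat_lt (by omega)]
        exact hk2ag i hi
      · rw [shift_iter_apply, show n - k2 + (k2 + i) = n + i by omega, wcat_ge]
  · -- x ∈ Σ with the bounds → wx ∈ Σ
    rintro ⟨hxS, hax, hxb⟩
    -- w occurs in Σ, so `U w` is nonempty
    have hUne : (U α β w).Nonempty := by
      obtain ⟨z, hz, hzw⟩ := hw
      obtain ⟨u, hu, hagree⟩ := mem_Sig_iff.1 hz n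
      refine ⟨u, hu, fun i hi => ?_⟩
      rw [hagree i hi, hzw ⟨i, hi⟩, List.get_eq_getElem, List.getD_eq_getElem _ _ hi]
    obtain ⟨s, t, hs0, hst, ht1, hV, hInv1, hInv2, hInv3, hInv5⟩ :=
      main_induction hβ hα0 hα1 b hb hbsup w hUne
    rw [mem_Sig_iff]
    intro N
    -- find a point of [s,t) whose digit sequence matches x to length N
    have key : ∃ u, s ≤ u ∧ u < t ∧ ∀ i < N, Om α β u i = x i := by
      obtain ⟨u, hu, hagree⟩ := mem_Sig_iff.1 hxS N
      rcases lt_or_ge u s with hus | hsu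
      · -- below the interval: the left endpoint works
        have h1 : lexLe (Om α β u) (Om α β s) := Om_mono hβ' hα0 hu.1 hus.le
        have h2 : lexLe (Om α β s) x := by rw [hInv1]; exact hax
        exact ⟨s, le_rfl, hst, agree_sandwich h1 h2 hagree⟩
      · rcases lt_or_ge u t with hut | htu
        · exact ⟨u, hsu, hut, hagree⟩
        · -- above the interval: x matches the upper bound, use Inv5
          have h1 : lexLe (shift^[k2] b) (Om α β u) := hInv3 u htu hu.2
          have h2 : ∀ i < N, x i = Om α β u i := fun i hi => (hagree i hi).symm
          have h3 : ∀ i < N, shift^[k2] b i = Om α β u i :=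
            agree_sandwich hxb h1 h2
          obtain ⟨v, hvs, hvt, hvag⟩ := hInv5 N
          exact ⟨v, hvs, hvt, fun i hi => by
            rw [hvag i hi, h3 i hi, ← h2 i hi]⟩
    obtain ⟨u, hus, hut, hagree⟩ := key
    -- pull back along F^[n]
    have : u ∈ V α β w := by rw [hV]; exact ⟨hus, hut⟩
    obtain ⟨y, hyU, hyu⟩ := this
    refine ⟨y, hyU.1, fun i hi => ?_⟩
    rcases Nat.lt_or_ge i n with hc | hc
    · rw [wcat_lt hc]
      exact hyU.2 i hc
    · obtain ⟨m, rfl⟩ : ∃ m, i = n + m := ⟨i - n, by omega⟩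
      rw [wcat_ge]
      have : Om α β y (n + m) = Om α β u m := by
        rw [← hyu, Om_iter, shift_iter_apply]
      rw [this]
      exact hagree m (by omega)

end IntermediateBeta
end
end

section
/- Fix reals α, β with 0 ≤ α < 1 and β > 1. For every word w in the language 𝓛 of Σ, if k₁(w) = k₂(w) then k₁(w) = k₂(w) = 0; equivalently, no word of 𝓛 has a tail segment of length k ≥ 1 agreeing simultaneously with (a_1,…,a_k) and with (b_1,…,b_k). -/
noncomputable section

namespace IntermediateBeta

/-- **No vertex `[k,k]` other than `[0,0]`.** For `0 ≤ α < 1` and `β > 1` and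
every word `w ∈ 𝓛`, if `k₁(w) = k₂(w)` then both are zero: no word of `𝓛` has a
tail segment of length `k ≥ 1` agreeing simultaneously with `(a_1,…,a_k)` and
`(b_1,…,b_k)`. -/
theorem k1_eq_k2_imp_zero (α β : ℝ) (hα0 : 0 ≤ α) (hα1 : α < 1) (hβ : 1 < β)
    (b : ℕ → ℕ) (hb : b ∈ Sig α β) (hbsup : ∀ y ∈ Sig α β, lexLe y b)
    (w : List ℕ) (hw : inLang α β w)
    (h : kmax (Om α β 0) w = kmax b w) :
    kmax (Om α β 0) w = 0 ∧ kmax b w = 0 := by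
  -- a 0 = 0
  have ha0 : Om α β 0 0 = 0 := by
    simp only [Om, Function.iterate_zero, id_eq, mul_zero, zero_add]
    rw [Int.floor_eq_zero_iff.2 ⟨hα0, hα1⟩]
    rfl
  -- b 0 ≥ 1
  have hβ0 : (0:ℝ) < β := lt_trans one_pos hβ
  set x : ℝ := (1 - α) / β with hx
  have hx01 : x ∈ Set.Ico (0:ℝ) 1 := by
    constructor
    · exact div_nonneg (by linarith) hβ0.le
    · rw [div_lt_one hβ0]; linarith
  have hOmx0 : Om α β x 0 = 1 := by
    simp only [Om, Function.iterate_zero, id_eq]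
    have : β * x + α = 1 := by
      rw [hx, mul_div_assoc', mul_comm, mul_div_assoc, div_self hβ0.ne', mul_one]; ring
    rw [this]
    norm_num
  have hxSig : Om α β x ∈ Sig α β :=
    subset_closure ⟨x, hx01, rfl⟩
  have hb0 : 1 ≤ b 0 := by
    rcases hbsup _ hxSig with heq | ⟨k, hik, hk⟩
    · rw [← heq, hOmx0]
    · rcases Nat.eq_zero_or_pos k with rfl | hkpos
      · omega
      · rw [← hik 0 hkpos, hOmx0]
  -- kmax values are achieved
  have key : ∀ s : ℕ → ℕ, tailAgrees s w (kmax s w) := by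
    intro s
    have : kmax s w ∈ {k | tailAgrees s w k} := by
      rw [kmax]
      apply Nat.sSup_mem
      · exact ⟨0, by simp [tailAgrees]⟩
      · exact ⟨w.length, fun k hk => hk.1⟩
    exact this
  rcases Nat.eq_zero_or_pos (kmax (Om α β 0) w) with h0 | hpos
  · exact ⟨h0, h ▸ h0⟩
  · exfalso
    have h1 := (key (Om α β 0)).2 0 hpos
    have h2 := (key b).2 0 (h ▸ hpos)
    rw [← h] at h2
    rw [h1, ha0] at h2
    omega

end IntermediateBeta
end
end

section
/- Fix reals α, β with 0 ≤ α < 1 and β > 1, and fix N ∈ ℕ. If w and v are words in the language 𝓛 of Σ with k₁(w) = k₁(v) = N, k₂(w) ≤ N and k₂(v) ≤ N, then k₂(w) = k₂(v); that is, there is only one vertex of the form [N, j] with j ≤ N. -/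
noncomputable section

namespace IntermediateBeta

/-- **Unique vertex `[N, j]` with `j ≤ N`.** For `0 ≤ α < 1`, `β > 1` and `N ∈ ℕ`:
if `w, v ∈ 𝓛` satisfy `k₁(w) = k₁(v) = N` and `k₂(w) ≤ N`, `k₂(v) ≤ N`, then
`k₂(w) = k₂(v)`. -/
theorem unique_vertex_with_first_coord (α β : ℝ) (hα0 : 0 ≤ α) (hα1 : α < 1)
    (hβ : 1 < β) (b : ℕ → ℕ) (hb : b ∈ Sig α β) (hbsup : ∀ y ∈ Sig α β, lexLe y b)
    (N : ℕ) (w v : List ℕ) (hw : inLang α β w) (hv : inLang α β v)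
    (hw1 : kmax (Om α β 0) w = N) (hv1 : kmax (Om α β 0) v = N)
    (hw2 : kmax b w ≤ N) (hv2 : kmax b v ≤ N) :
    kmax b w = kmax b v := by
  set a := Om α β 0 with ha
  have hbdd : ∀ (s : ℕ → ℕ) (u : List ℕ), BddAbove {k | tailAgrees s u k} :=
    fun s u => ⟨u.length, fun k hk => hk.1⟩
  have hne : ∀ (s : ℕ → ℕ) (u : List ℕ), (0 : ℕ) ∈ {k | tailAgrees s u k} :=
    fun s u => ⟨Nat.zero_le _, fun i hi => absurd hi (Nat.not_lt_zero i)⟩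
  have hmem : ∀ (s : ℕ → ℕ) (u : List ℕ), tailAgrees s u (kmax s u) :=
    fun s u => Nat.sSup_mem ⟨0, hne s u⟩ (hbdd s u)
  have hwN : tailAgrees a w N := hw1 ▸ hmem a w
  have hvN : tailAgrees a v N := hv1 ▸ hmem a v
  have key : ∀ (u : List ℕ), tailAgrees a u N → ∀ k ≤ N, tailAgrees b u k →
      ∀ i < k, a (N - k + i) = b i := by
    intro u hu k hk htk i hi
    have h1 := hu.2 (N - k + i) (by omega)
    have h2 := htk.2 i hi
    have heq : u.length - N + (N - k + i) = u.length - k + i := by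
      have := hu.1; omega
    rw [heq] at h1
    rw [← h1, ← h2]
  have key2 : ∀ (u : List ℕ), tailAgrees a u N →
      ∀ k ≤ N, (∀ i < k, a (N - k + i) = b i) → tailAgrees b u k := by
    intro u hu k hk hab
    refine ⟨le_trans hk hu.1, fun i hi => ?_⟩
    have h1 := hu.2 (N - k + i) (by omega)
    have heq : u.length - N + (N - k + i) = u.length - k + i := by
      have := hu.1; omega
    rw [heq] at h1
    rw [h1, hab i hi]
  have hle : ∀ u u', tailAgrees a u N → tailAgrees a u' N →
      kmax b u ≤ N → tailAgrees b u' (kmax b u) := by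
    intro u u' hu hu' hk
    exact key2 u' hu' _ hk (key u hu _ hk (hmem b u))
  have h1 : kmax b w ≤ kmax b v := le_csSup (hbdd b v) (hle w v hwN hvN hw2)
  have h2 : kmax b v ≤ kmax b w := le_csSup (hbdd b w) (hle v w hvN hwN hv2)
  omega

end IntermediateBeta
end
end

section
/- Fix reals α, β with 0 ≤ α < 1 and β > 2, and let F : [0,1) → [0,1) be F(x) = βx + α − ⌊βx + α⌋. For every nondegenerate interval I ⊆ [0,1) there exist τ ∈ ℕ and a subinterval L ⊆ I such that F^τ(L) = [0,1) and the restriction of F^τ to L is continuous. -/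
noncomputable section

namespace IntermediateBeta

set_option maxHeartbeats 1000000

lemma affine_image {k : ℝ} (hk : 0 < k) (c u v : ℝ) :
    (fun x => k * x + c) '' Set.Ico u v = Set.Ico (k * u + c) (k * v + c) := by
  ext y
  simp only [Set.mem_image, Set.mem_Ico]
  constructor
  · rintro ⟨x, ⟨h1, h2⟩, rfl⟩
    constructor <;> nlinarith
  · rintro ⟨h1, h2⟩
    refine ⟨(y - c) / k, ⟨?_, ?_⟩, by field_simp; ring⟩
    · rw [le_div_iff₀ hk]; nlinarith
    · rw [div_lt_iff₀ hk]; nlinarith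

lemma F_eq (α β t : ℝ) (m : ℤ) (h1 : (m : ℝ) ≤ β * t + α) (h2 : β * t + α < (m : ℝ) + 1) :
    F α β t = β * t + α - m := by
  have h : ⌊β * t + α⌋ = m := Int.floor_eq_iff.mpr ⟨h1, h2⟩
  simp [F, Int.fract, h]

lemma step (α β : ℝ) (hβ0 : 0 < β) {n : ℕ} {u v c p q : ℝ} (m : ℤ)
    (hF : ∀ t ∈ Set.Ico u v, (F α β)^[n] t = β ^ n * t + c)
    (hpu : β ^ n * u + c ≤ p) (hqv : q ≤ β ^ n * v + c) (hpq : p < q)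
    (hm1 : (m : ℝ) ≤ β * p + α) (hm2 : β * q + α ≤ (m : ℝ) + 1) :
    ∃ u' v' : ℝ, u ≤ u' ∧ u' < v' ∧ v' ≤ v ∧
      (∀ t ∈ Set.Ico u' v', (F α β)^[n + 1] t = β ^ (n + 1) * t + (β * c + α - (m : ℝ))) ∧
      β ^ (n + 1) * u' + (β * c + α - (m : ℝ)) = β * p + α - (m : ℝ) ∧
      β ^ (n + 1) * v' + (β * c + α - (m : ℝ)) = β * q + α - (m : ℝ) := by
  have hpow : (0 : ℝ) < β ^ n := pow_pos hβ0 n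
  refine ⟨(p - c) / β ^ n, (q - c) / β ^ n, ?_, ?_, ?_, ?_, ?_, ?_⟩
  · rw [le_div_iff₀ hpow]; nlinarith
  · rw [div_lt_div_iff₀ hpow hpow]; nlinarith
  · rw [div_le_iff₀ hpow]; nlinarith
  · intro t ht
    have hu' : β ^ n * ((p - c) / β ^ n) + c = p := by field_simp; ring
    have hv' : β ^ n * ((q - c) / β ^ n) + c = q := by field_simp; ring
    have htuv : t ∈ Set.Ico u v := by
      constructor
      · have h2 : u ≤ (p - c) / β ^ n := by rw [le_div_iff₀ hpow]; nlinarith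
        linarith [ht.1]
      · have h2 : (q - c) / β ^ n ≤ v := by rw [div_le_iff₀ hpow]; nlinarith
        linarith [ht.2]
    have h1 := hF t htuv
    have hp_le : p ≤ β ^ n * t + c := by
      have := mul_le_mul_of_nonneg_left ht.1 hpow.le; linarith [hu']
    have hq_gt : β ^ n * t + c < q := by
      have := mul_lt_mul_of_pos_left ht.2 hpow; linarith [hv']
    have hA : (m : ℝ) ≤ β * (β ^ n * t + c) + α := by
      have := mul_le_mul_of_nonneg_left hp_le hβ0.le; linarith
    have hB : β * (β ^ n * t + c) + α < (m : ℝ) + 1 := by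
      have := mul_lt_mul_of_pos_left hq_gt hβ0; linarith
    rw [Function.iterate_succ_apply', h1, F_eq α β (β ^ n * t + c) m hA hB]
    ring
  · have hu' : β ^ n * ((p - c) / β ^ n) + c = p := by field_simp; ring
    linear_combination β * hu'
  · have hv' : β ^ n * ((q - c) / β ^ n) + c = q := by field_simp; ring
    linear_combination β * hv'

/-- **Proposition (full returns).** For `0 ≤ α < 1` and `β > 2`: for every
nondegenerate interval `I ⊆ [0,1)` there are `τ ∈ ℕ` and a subinterval `L ⊆ I`
such that `F^τ(L) = [0,1)` and `F^τ` restricted to `L` is continuous. -/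
theorem exists_full_return (α β : ℝ) (hα0 : 0 ≤ α) (hα1 : α < 1) (hβ : 2 < β)
    (I : Set ℝ) (hI : I ⊆ Set.Ico (0 : ℝ) 1) (hconn : I.OrdConnected)
    (hnd : ∃ x ∈ I, ∃ y ∈ I, x < y) :
    ∃ τ : ℕ, 1 ≤ τ ∧ ∃ L : Set ℝ, L ⊆ I ∧ L.OrdConnected ∧
      (F α β)^[τ] '' L = Set.Ico (0 : ℝ) 1 ∧ ContinuousOn ((F α β)^[τ]) L := by
  obtain ⟨x, hx, y, hy, hxy⟩ := hnd
  have hβ0 : (0 : ℝ) < β := by linarith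
  set δ := y - x with hδdef
  have hδ : 0 < δ := by rw [hδdef]; linarith
  have hx0 : 0 ≤ x := (hI hx).1
  have hy1 : y ≤ 1 := le_of_lt (hI hy).2
  by_contra hno
  have key : ∀ n : ℕ, ∃ u v c : ℝ, u < v ∧ Set.Ico u v ⊆ I ∧
      (∀ t ∈ Set.Ico u v, (F α β)^[n] t = β ^ n * t + c) ∧
      0 ≤ β ^ n * u + c ∧ β ^ n * v + c ≤ 1 ∧
      (β / 2) ^ n * δ ≤ β ^ n * (v - u) := by
    intro n
    induction n with
    | zero =>
      refine ⟨x, y, 0, hxy, ?_, ?_, by simpa using hx0, by simpa using hy1, by simp [hδdef]⟩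
      · exact fun t ht => hconn.out hx hy (Set.Ico_subset_Icc_self ht)
      · intro t ht; simp
    | succ n ih =>
      obtain ⟨u, v, c, huv, hsub, hF, ha0, hb1, hlen⟩ := ih
      have hpow : (0 : ℝ) < β ^ n := pow_pos hβ0 n
      set a := β ^ n * u + c with hadef
      set b := β ^ n * v + c with hbdef
      have hab : a < b := by
        rw [hadef, hbdef]
        have := mul_lt_mul_of_pos_left huv hpow; linarith
      have hba2 : β ^ n * (v - u) = b - a := by rw [hadef, hbdef]; ring
      have hba_pos : 0 < b - a := by linarith
      set m0 := ⌊β * a + α⌋ with hm0def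
      have hm0le : (m0 : ℝ) ≤ β * a + α := Int.floor_le _
      have hm0lt : β * a + α < (m0 : ℝ) + 1 := Int.lt_floor_add_one _
      set d := ((m0 : ℝ) + 1 - α) / β with hddef
      have hdeq : β * d + α = (m0 : ℝ) + 1 := by rw [hddef]; field_simp; ring
      have had : a < d := by nlinarith
      set e := ((m0 : ℝ) + 2 - α) / β with heedef
      have heeq : β * e + α = (m0 : ℝ) + 2 := by rw [heedef]; field_simp; ring
      have hde : d < e := by nlinarith
      by_cases hcase : e ≤ b
      · -- a full branch [d, e) fits inside [a, b): produce the answer, contradiction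
        exfalso
        obtain ⟨u', v', huu', hu'v', hv'v, hF', hend1, hend2⟩ :=
          step α β hβ0 (m0 + 1) hF (p := d) (q := e)
            (by rw [← hadef]; linarith) (by rw [← hbdef]; linarith) hde
            (by push_cast; linarith) (by push_cast; linarith)
        apply hno
        refine ⟨n + 1, Nat.le_add_left 1 n, Set.Ico u' v',
          fun t ht => hsub ⟨le_trans huu' ht.1, lt_of_lt_of_le ht.2 hv'v⟩,
          Set.ordConnected_Ico, ?_, ?_⟩
        · rw [Set.image_congr hF', affine_image (pow_pos hβ0 (n + 1))]
          have h0 : β ^ (n + 1) * u' + (β * c + α - ((m0 + 1 : ℤ) : ℝ)) = 0 := by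
            push_cast at hend1 ⊢; linarith
          have h1 : β ^ (n + 1) * v' + (β * c + α - ((m0 + 1 : ℤ) : ℝ)) = 1 := by
            push_cast at hend2 ⊢; linarith
          rw [h0, h1]
        · exact ((continuous_const.mul continuous_id).add continuous_const).continuousOn.congr
            fun t ht => hF' t ht
      · push_neg at hcase
        -- choose a subinterval [p, q) of [a, b) with a single branch and q - p ≥ (b-a)/2
        have hmain : ∃ p q : ℝ, ∃ m : ℤ, a ≤ p ∧ q ≤ b ∧ p < q ∧ (b - a) / 2 ≤ q - p ∧
            (m : ℝ) ≤ β * p + α ∧ β * q + α ≤ (m : ℝ) + 1 ∧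
            0 ≤ β * p + α - (m : ℝ) ∧ β * q + α - (m : ℝ) ≤ 1 := by
          by_cases hbd : b ≤ d
          · refine ⟨a, b, m0, le_refl _, le_refl _, hab, by linarith, hm0le, ?_, ?_, ?_⟩
            · nlinarith
            · linarith
            · nlinarith
          · push_neg at hbd
            by_cases hmid : a + b ≤ 2 * d
            · refine ⟨a, d, m0, le_refl _, by linarith, had, by linarith, hm0le,
                by linarith, by linarith, by linarith⟩
            · push_neg at hmid
              refine ⟨d, b, m0 + 1, le_of_lt had, le_refl _, hbd, by linarith, ?_, ?_, ?_, ?_⟩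
              · push_cast; linarith
              · push_cast; nlinarith
              · push_cast; linarith
              · push_cast; nlinarith
        obtain ⟨p, q, m, hap, hqb, hpq, hhalf, hm1, hm2, hlo, hhi⟩ := hmain
        obtain ⟨u', v', huu', hu'v', hv'v, hF', hend1, hend2⟩ :=
          step α β hβ0 m hF (p := p) (q := q)
            (by rw [← hadef]; linarith) (by rw [← hbdef]; linarith) hpq hm1 hm2
        refine ⟨u', v', β * c + α - (m : ℝ), hu'v',
          fun t ht => hsub ⟨le_trans huu' ht.1, lt_of_lt_of_le ht.2 hv'v⟩,
          hF', by linarith [hend1, hlo], by linarith [hend2, hhi], ?_⟩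
        have hdiff : β ^ (n + 1) * (v' - u') = β * (q - p) := by
          have := hend1; have := hend2; nlinarith [hend1, hend2]
        calc (β / 2) ^ (n + 1) * δ = (β / 2) * ((β / 2) ^ n * δ) := by ring
          _ ≤ (β / 2) * (β ^ n * (v - u)) := by
              apply mul_le_mul_of_nonneg_left hlen (by linarith)
          _ = (β / 2) * (b - a) := by rw [hba2]
          _ = β * ((b - a) / 2) := by ring
          _ ≤ β * (q - p) := mul_le_mul_of_nonneg_left hhalf hβ0.le
          _ = β ^ (n + 1) * (v' - u') := hdiff.symm
  -- derive the contradiction: lengths grow unboundedly but stay ≤ 1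
  obtain ⟨n, hn⟩ := pow_unbounded_of_one_lt (1 / δ) (by linarith : (1 : ℝ) < β / 2)
  obtain ⟨u, v, c, huv, _, _, ha0, hb1, hlen⟩ := key n
  have hr : β ^ n * (v - u) = (β ^ n * v + c) - (β ^ n * u + c) := by ring
  rw [div_lt_iff₀ hδ] at hn
  linarith


end IntermediateBeta
end
end
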